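/- Let ℓ be convex with L-Lipschitz gradient, and suppose at each iteration the batch gradient noise e_t = ∇ℓ_B(x_t) - ∇ℓ(x_t) satisfies E[e_t | x_t] = 0 and E||e_t||² ≤ (θ²/(1-θ)²)||∇ℓ(x_t)||². Let β = (θ²+(1-θ)²)/(1-θ)². Then for updates x_{t+1} = x_t - α∇ℓ_B(x_t) with α < 1/(Lβ), E[ℓ(x_T) - ℓ(x*)] ≤ ||x_0 - x*||²/((2α - 2Lα²β)(T+1)), and with α = 1/(2Lβ), E[ℓ(x_T) - ℓ(x*)] ≤ 2Lβ||x_0 - x*||²/(T+1). -/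

import Mathlib

open MeasureTheory
open scoped RealInnerProductSpace

section Helpers

variable {Ω : Type*} [MeasurableSpace Ω] {P : Measure Ω}

private lemma integrable_inner_L2 {F : Type*} [NormedAddCommGroup F] [InnerProductSpace ℝ F]
    {f h : Ω → F} (hf : MemLp f 2 P) (hh : MemLp h 2 P) :
    Integrable (fun ω => ⟪f ω, h ω⟫) P := by
  have hI := MeasureTheory.L2.integrable_inner (𝕜 := ℝ) (hf.toLp f) (hh.toLp h)
  refine hI.congr ?_
  filter_upwards [hf.coeFn_toLp, hh.coeFn_toLp] with ω h1 h2
  rw [h1, h2]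

private lemma integrable_mul_L2 [IsFiniteMeasure P] {f h : Ω → ℝ}
    (hf : MemLp f 2 P) (hh : MemLp h 2 P) :
    Integrable (fun ω => f ω * h ω) P := by
  have := (hh.smul (φ := f) hf (r := 1)).integrable le_rfl
  exact this

private lemma integrable_norm_sq_L2 {F : Type*} [NormedAddCommGroup F] [InnerProductSpace ℝ F]
    {f : Ω → F} (hf : MemLp f 2 P) : Integrable (fun ω => ‖f ω‖ ^ 2) P := by
  have := integrable_inner_L2 hf hf
  simpa [real_inner_self_eq_norm_sq] using this

private lemma sq_expand {F : Type*} [NormedAddCommGroup F] [InnerProductSpace ℝ F]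
    (a u v : F) (α : ℝ) :
    ‖a - α • (u + v)‖ ^ 2
      = ‖a‖ ^ 2 - 2 * α * ⟪a, u⟫ - 2 * α * ⟪a, v⟫ + α ^ 2 * ‖u‖ ^ 2
        + 2 * α ^ 2 * ⟪u, v⟫ + α ^ 2 * ‖v‖ ^ 2 := by
  have h1 : ‖a - α • (u + v)‖ ^ 2 = ‖a‖ ^ 2 - 2 * ⟪a, α • (u + v)⟫ + ‖α • (u + v)‖ ^ 2 :=
    norm_sub_sq_real a _
  have h2 : ‖α • (u + v)‖ ^ 2 = α ^ 2 * ‖u + v‖ ^ 2 := by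
    rw [norm_smul, Real.norm_eq_abs, mul_pow, sq_abs]
  have h3 : ‖u + v‖ ^ 2 = ‖u‖ ^ 2 + 2 * ⟪u, v⟫ + ‖v‖ ^ 2 := norm_add_sq_real u v
  have h4 : ⟪a, α • (u + v)⟫ = α * (⟪a, u⟫ + ⟪a, v⟫) := by
    rw [inner_smul_right, inner_add_right]
  rw [h1, h2, h3, h4]; ring

private lemma integral_inner_noise_zero {d : ℕ} {Ω : Type*} {m m0 : MeasurableSpace Ω}
    (hm : m ≤ m0) (P : Measure Ω) [IsProbabilityMeasure P]
    (X E' : Ω → EuclideanSpace ℝ (Fin d)) (hXm : Measurable[m] X)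
    (hE2 : MemLp E' 2 P)
    (hcond : P[E' | m] =ᵐ[P] 0)
    (φ : EuclideanSpace ℝ (Fin d) → EuclideanSpace ℝ (Fin d)) (hφ : Measurable φ)
    (hφ2 : MemLp (fun ω => φ (X ω)) 2 P) :
    ∫ ω, ⟪φ (X ω), E' ω⟫ ∂P = 0 := by
  have hEint : Integrable E' P := hE2.integrable one_le_two
  have hcoord : ∀ i : Fin d, P[(fun ω => E' ω i) | m] =ᵐ[P] 0 := by
    intro i
    have hLint : Integrable (fun ω => E' ω i) P := by
      have := (EuclideanSpace.proj (𝕜 := ℝ) i).integrable_comp hEint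
      simpa using this
    refine (ae_eq_condExp_of_forall_setIntegral_eq hm hLint
      (fun s _ _ => (integrable_zero _ _ _).integrableOn)
      (fun s hs hμs => ?_)
      (stronglyMeasurable_const.aestronglyMeasurable)).symm
    have h1 : ∫ ω in s, E' ω ∂P = 0 := by
      rw [← setIntegral_condExp hm hEint hs]
      calc ∫ ω in s, (P[E'|m]) ω ∂P
          = ∫ ω in s, (0 : Ω → EuclideanSpace ℝ (Fin d)) ω ∂P :=
            integral_congr_ae (ae_restrict_of_ae hcond)
        _ = 0 := by simp
    have h2 := (EuclideanSpace.proj (𝕜 := ℝ) i).integral_comp_comm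
      (hEint.integrableOn (s := s))
    simp only [h1] at h2
    simpa using h2.symm
  have hmem2 : ∀ i : Fin d, MemLp (fun ω => φ (X ω) i) 2 P ∧ MemLp (fun ω => E' ω i) 2 P := by
    intro i
    constructor
    · have := (EuclideanSpace.proj (𝕜 := ℝ) i).comp_memLp' hφ2
      exact this
    · have := (EuclideanSpace.proj (𝕜 := ℝ) i).comp_memLp' hE2
      exact this
  have hterm : ∀ i : Fin d, ∫ ω, φ (X ω) i * E' ω i ∂P = 0 := by
    intro i
    obtain ⟨hfi2, hei2⟩ := hmem2 i
    have hfg : Integrable ((fun ω => φ (X ω) i) * fun ω => E' ω i) P := by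
      exact integrable_mul_L2 hfi2 hei2
    have hgi : Integrable (fun ω => E' ω i) P := hei2.integrable one_le_two
    have hfm : StronglyMeasurable[m] (fun ω => φ (X ω) i) := by
      have hmeas : Measurable[m] (fun ω => φ (X ω) i) :=
        ((EuclideanSpace.proj (𝕜 := ℝ) i).continuous.measurable.comp hφ).comp hXm
      exact hmeas.stronglyMeasurable
    have hpull := condExp_mul_of_stronglyMeasurable_left (μ := P) hfm hfg hgi
    have h0 : ∫ ω, ((fun ω => φ (X ω) i) * fun ω => E' ω i) ω ∂P = 0 := by
      rw [← integral_condExp hm]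
      refine integral_eq_zero_of_ae ?_
      filter_upwards [hpull, hcoord i] with ω h1 h2
      simp only [Pi.mul_apply] at h1 ⊢
      rw [h1]
      simp only [Pi.mul_apply, h2]
      simp
    simpa [Pi.mul_apply] using h0
  have hinner : (fun ω => ⟪φ (X ω), E' ω⟫) = fun ω => ∑ i, φ (X ω) i * E' ω i := by
    funext ω
    rw [PiLp.inner_apply]
    simp [RCLike.inner_apply, mul_comm]
  rw [hinner, integral_finset_sum]
  · exact Finset.sum_eq_zero fun i _ => hterm i
  · intro i _
    obtain ⟨hfi2, hei2⟩ := hmem2 i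
    exact integrable_mul_L2 hfi2 hei2

end Helpers

set_option maxHeartbeats 1600000 in
/-- Sublinear `O(1/T)` convergence of big batch SGD for convex `L`-smooth objectives:
with zero conditional-mean noise satisfying the big batch bound (in expectation) and a
constant stepsize `α < 1/(Lβ)`,
`E[ℓ(x_T) - ℓ(x*)] ≤ ‖x_0 - x*‖² / ((2α - 2Lα²β)(T+1))`;
with `α = 1/(2Lβ)` this is `2Lβ‖x_0 - x*‖²/(T+1)`. -/
theorem big_batch_sublinear_convex {d : ℕ} {Ω : Type*} [MeasurableSpace Ω]
    (P : Measure Ω) [IsProbabilityMeasure P]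
    (ℓ : EuclideanSpace ℝ (Fin d) → ℝ) (g : EuclideanSpace ℝ (Fin d) → EuclideanSpace ℝ (Fin d))
    (L : ℝ) (hL : 0 < L)
    (hsmooth : ∀ x y, ℓ x ≤ ℓ y + ⟪g y, x - y⟫ + L / 2 * ‖x - y‖ ^ 2)
    (hconvex : ∀ x y, ℓ y + ⟪g y, x - y⟫ ≤ ℓ x)
    (xstar : EuclideanSpace ℝ (Fin d)) (hmin : ∀ x, ℓ xstar ≤ ℓ x)
    (θ : ℝ) (hθ : θ ∈ Set.Ioo (0 : ℝ) 1)
    (β : ℝ) (hβ : β = (θ ^ 2 + (1 - θ) ^ 2) / (1 - θ) ^ 2)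
    (α : ℝ) (hα0 : 0 < α) (hα : α < 1 / (L * β))
    (x e : ℕ → Ω → EuclideanSpace ℝ (Fin d))
    (hxmeas : ∀ t, Measurable (x t))
    (hx2 : ∀ t, MemLp (x t) 2 P) (he2 : ∀ t, MemLp (e t) 2 P)
    (hupdate : ∀ t ω, x (t + 1) ω = x t ω - α • (g (x t ω) + e t ω))
    (hnoise_mean : ∀ t, P[e t | MeasurableSpace.comap (x t) inferInstance] =ᵐ[P] 0)
    (hnoise_bound : ∀ t, ∫ ω, ‖e t ω‖ ^ 2 ∂P
        ≤ θ ^ 2 / (1 - θ) ^ 2 * ∫ ω, ‖g (x t ω)‖ ^ 2 ∂P)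
    (hℓint : ∀ t, Integrable (fun ω => ℓ (x t ω)) P)
    (hg2 : ∀ t, MemLp (fun ω => g (x t ω)) 2 P)
    (x0 : EuclideanSpace ℝ (Fin d)) (hx0 : ∀ ω, x 0 ω = x0) :
    (∀ T : ℕ, ∫ ω, (ℓ (x T ω) - ℓ xstar) ∂P
        ≤ ‖x0 - xstar‖ ^ 2 / ((2 * α - 2 * L * α ^ 2 * β) * (T + 1)))
    ∧ (α = 1 / (2 * L * β) →
        ∀ T : ℕ, ∫ ω, (ℓ (x T ω) - ℓ xstar) ∂P
          ≤ 2 * L * β * ‖x0 - xstar‖ ^ 2 / (T + 1)) := by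
  obtain ⟨hθ0, hθ1⟩ := hθ
  have h1θ : (0:ℝ) < 1 - θ := by linarith
  have hβpos : 0 < β := by
    rw [hβ]
    apply div_pos
    · nlinarith [sq_nonneg (1 - θ), pow_pos hθ0 2]
    · positivity
  have hβ1 : β - 1 = θ ^ 2 / (1 - θ) ^ 2 := by
    rw [hβ]; field_simp; ring
  have hLβ : 0 < L * β := mul_pos hL hβpos
  have hαLβ : α * (L * β) < 1 := by
    have h := (lt_div_iff₀ hLβ).mp hα
    linarith
  have hc : 0 < 2 * α - 2 * L * α ^ 2 * β := by nlinarith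
  have hiL : L * (1 / L) = 1 := mul_one_div_cancel hL.ne'
  -- pointwise gradient inequalities
  have hgrad_sq : ∀ y z, ‖g y - g z‖ ^ 2 ≤ 2 * L * (ℓ y - ℓ z - ⟪g z, y - z⟫) := by
    intro y z
    have h1 := hsmooth (y - (1 / L) • (g y - g z)) y
    have h2 := hconvex (y - (1 / L) • (g y - g z)) z
    rw [sub_sub_cancel_left] at h1
    rw [inner_neg_right, real_inner_smul_right] at h1
    rw [norm_neg, norm_smul, Real.norm_eq_abs, mul_pow, sq_abs] at h1
    rw [sub_right_comm, inner_sub_right, real_inner_smul_right] at h2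
    have key4 : ⟪g y, g y - g z⟫ - ⟪g z, g y - g z⟫ = ‖g y - g z‖ ^ 2 := by
      rw [← inner_sub_left, real_inner_self_eq_norm_sq]
    have hRw : L/2 * ((1/L) ^ 2 * ‖g y - g z‖ ^ 2) = 1/L * ‖g y - g z‖ ^ 2 / 2 := by
      field_simp
    have hLHS : 1/L * ⟪g y, g y - g z⟫ - 1/L * ⟪g z, g y - g z⟫
        = 1/L * ‖g y - g z‖ ^ 2 := by rw [← mul_sub, key4]
    have hstep3 : 1/L * ‖g y - g z‖ ^ 2 ≤ 2 * (ℓ y - ℓ z - ⟪g z, y - z⟫) := by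
      rw [hRw] at h1
      nlinarith [h1, h2, hLHS]
    have h5 := mul_le_mul_of_nonneg_left hstep3 hL.le
    have h6 : L * (1/L * ‖g y - g z‖ ^ 2) = ‖g y - g z‖ ^ 2 := by field_simp
    linarith [h5, h6]
  have hB : ∀ y, ‖g y‖ ^ 2 ≤ 2 * L * (ℓ y - ℓ xstar) := by
    intro y
    have h1 := hsmooth (y - (1 / L) • g y) y
    have h2 := hmin (y - (1 / L) • g y)
    rw [sub_sub_cancel_left] at h1
    rw [inner_neg_right, real_inner_smul_right, real_inner_self_eq_norm_sq] at h1
    rw [norm_neg, norm_smul, Real.norm_eq_abs, mul_pow, sq_abs] at h1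
    have hRw : L/2 * ((1/L) ^ 2 * ‖g y‖ ^ 2) = 1/L * ‖g y‖ ^ 2 / 2 := by
      field_simp
    rw [hRw] at h1
    have hstep3 : 1/L * ‖g y‖ ^ 2 ≤ 2 * (ℓ y - ℓ xstar) := by linarith
    have h5 := mul_le_mul_of_nonneg_left hstep3 hL.le
    have h6 : L * (1/L * ‖g y‖ ^ 2) = ‖g y‖ ^ 2 := by field_simp
    linarith [h5, h6]
  have hLip : ∀ y z, ‖g y - g z‖ ≤ L * ‖y - z‖ := by
    intro y z
    have h := hgrad_sq y z
    have h2 := hsmooth y z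
    have hsq : ‖g y - g z‖ ^ 2 ≤ (L * ‖y - z‖) ^ 2 := by nlinarith
    have := Real.sqrt_le_sqrt hsq
    rwa [Real.sqrt_sq (norm_nonneg _), Real.sqrt_sq (by positivity)] at this
  have hgcont : Continuous g := by
    refine LipschitzWith.continuous (K := L.toNNReal) ?_
    refine LipschitzWith.of_dist_le_mul fun y z => ?_
    rw [dist_eq_norm, dist_eq_norm]
    simpa [Real.coe_toNNReal L hL.le] using hLip y z
  have hgmeas : Measurable g := hgcont.measurable
  -- integrability facts
  have ha2 : ∀ t, MemLp (fun ω => x t ω - xstar) 2 P :=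
    fun t => (hx2 t).sub (memLp_const xstar)
  have hiA : ∀ t, Integrable (fun ω => ‖x t ω - xstar‖ ^ 2) P :=
    fun t => integrable_norm_sq_L2 (ha2 t)
  have hiU : ∀ t, Integrable (fun ω => ‖g (x t ω)‖ ^ 2) P :=
    fun t => integrable_norm_sq_L2 (hg2 t)
  have hiV : ∀ t, Integrable (fun ω => ‖e t ω‖ ^ 2) P :=
    fun t => integrable_norm_sq_L2 (he2 t)
  have hiAU : ∀ t, Integrable (fun ω => ⟪x t ω - xstar, g (x t ω)⟫) P :=
    fun t => integrable_inner_L2 (ha2 t) (hg2 t)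
  have hiAV : ∀ t, Integrable (fun ω => ⟪x t ω - xstar, e t ω⟫) P :=
    fun t => integrable_inner_L2 (ha2 t) (he2 t)
  have hiUV : ∀ t, Integrable (fun ω => ⟪g (x t ω), e t ω⟫) P :=
    fun t => integrable_inner_L2 (hg2 t) (he2 t)
  have hiδ : ∀ t, Integrable (fun ω => ℓ (x t ω) - ℓ xstar) P :=
    fun t => (hℓint t).sub (integrable_const _)
  -- zero-mean noise integrals
  have hm : ∀ t, MeasurableSpace.comap (x t) inferInstance ≤ ‹MeasurableSpace Ω› :=
    fun t => measurable_iff_comap_le.mp (hxmeas t)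
  have hXm : ∀ t, Measurable[MeasurableSpace.comap (x t) inferInstance] (x t) :=
    fun t => Measurable.of_comap_le le_rfl
  have hIUV0 : ∀ t, ∫ ω, ⟪g (x t ω), e t ω⟫ ∂P = 0 :=
    fun t => integral_inner_noise_zero (hm t) P (x t) (e t) (hXm t) (he2 t)
      (hnoise_mean t) g hgmeas (hg2 t)
  have hIAV0 : ∀ t, ∫ ω, ⟪x t ω - xstar, e t ω⟫ ∂P = 0 :=
    fun t => integral_inner_noise_zero (hm t) P (x t) (e t) (hXm t) (he2 t)
      (hnoise_mean t) (fun y => y - xstar) (measurable_id.sub measurable_const) (ha2 t)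
  -- scalar integral facts
  have hGV : ∀ t, ∫ ω, ‖e t ω‖ ^ 2 ∂P ≤ (β - 1) * ∫ ω, ‖g (x t ω)‖ ^ 2 ∂P := by
    intro t; rw [hβ1]; exact hnoise_bound t
  have hGU0 : ∀ t, 0 ≤ ∫ ω, ‖g (x t ω)‖ ^ 2 ∂P :=
    fun t => integral_nonneg fun ω => sq_nonneg _
  have hδ0 : ∀ t, 0 ≤ ∫ ω, (ℓ (x t ω) - ℓ xstar) ∂P :=
    fun t => integral_nonneg fun ω => sub_nonneg.mpr (hmin _)
  have hA0 : ∀ t, 0 ≤ ∫ ω, ‖x t ω - xstar‖ ^ 2 ∂P :=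
    fun t => integral_nonneg fun ω => sq_nonneg _
  have hIAUge : ∀ t, ∫ ω, (ℓ (x t ω) - ℓ xstar) ∂P
      ≤ ∫ ω, ⟪x t ω - xstar, g (x t ω)⟫ ∂P := by
    intro t
    refine integral_mono (hiδ t) (hiAU t) fun ω => ?_
    have h := hconvex xstar (x t ω)
    have hin : ⟪g (x t ω), xstar - x t ω⟫ = -⟪x t ω - xstar, g (x t ω)⟫ := by
      rw [show xstar - x t ω = -(x t ω - xstar) from (neg_sub _ _).symm, inner_neg_right,
        real_inner_comm]
    rw [hin] at h
    simp only
    linarith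
  have hGle : ∀ t, ∫ ω, ‖g (x t ω)‖ ^ 2 ∂P
      ≤ 2 * L * ∫ ω, (ℓ (x t ω) - ℓ xstar) ∂P := by
    intro t
    calc ∫ ω, ‖g (x t ω)‖ ^ 2 ∂P
        ≤ ∫ ω, 2 * L * (ℓ (x t ω) - ℓ xstar) ∂P :=
          integral_mono (hiU t) ((hiδ t).const_mul _) fun ω => hB _
      _ = 2 * L * ∫ ω, (ℓ (x t ω) - ℓ xstar) ∂P := integral_const_mul _ _
  -- recursion for the distances
  have hDrec : ∀ t, ∫ ω, ‖x (t+1) ω - xstar‖ ^ 2 ∂P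
      ≤ ∫ ω, ‖x t ω - xstar‖ ^ 2 ∂P
        - (2 * α - 2 * L * α ^ 2 * β) * ∫ ω, (ℓ (x t ω) - ℓ xstar) ∂P := by
    intro t
    have hfun : (fun ω => ‖x (t+1) ω - xstar‖ ^ 2)
        = fun ω => ‖x t ω - xstar‖ ^ 2 - 2 * α * ⟪x t ω - xstar, g (x t ω)⟫
            - 2 * α * ⟪x t ω - xstar, e t ω⟫ + α ^ 2 * ‖g (x t ω)‖ ^ 2
            + 2 * α ^ 2 * ⟪g (x t ω), e t ω⟫ + α ^ 2 * ‖e t ω‖ ^ 2 := by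
      funext ω
      rw [hupdate t ω, sub_right_comm]
      exact sq_expand _ _ _ _
    rw [hfun]
    have i1 : Integrable (fun ω => ‖x t ω - xstar‖ ^ 2
        - 2 * α * ⟪x t ω - xstar, g (x t ω)⟫) P := (hiA t).sub ((hiAU t).const_mul _)
    have i2 : Integrable (fun ω => ‖x t ω - xstar‖ ^ 2
        - 2 * α * ⟪x t ω - xstar, g (x t ω)⟫
        - 2 * α * ⟪x t ω - xstar, e t ω⟫) P := i1.sub ((hiAV t).const_mul _)
    have i3 : Integrable (fun ω => ‖x t ω - xstar‖ ^ 2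
        - 2 * α * ⟪x t ω - xstar, g (x t ω)⟫
        - 2 * α * ⟪x t ω - xstar, e t ω⟫ + α ^ 2 * ‖g (x t ω)‖ ^ 2) P :=
      i2.add ((hiU t).const_mul _)
    have i4 : Integrable (fun ω => ‖x t ω - xstar‖ ^ 2
        - 2 * α * ⟪x t ω - xstar, g (x t ω)⟫
        - 2 * α * ⟪x t ω - xstar, e t ω⟫ + α ^ 2 * ‖g (x t ω)‖ ^ 2
        + 2 * α ^ 2 * ⟪g (x t ω), e t ω⟫) P := i3.add ((hiUV t).const_mul _)
    rw [integral_add i4 ((hiV t).const_mul _), integral_add i3 ((hiUV t).const_mul _),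
      integral_add i2 ((hiU t).const_mul _), integral_sub i1 ((hiAV t).const_mul _),
      integral_sub (hiA t) ((hiAU t).const_mul _), integral_const_mul, integral_const_mul,
      integral_const_mul, integral_const_mul, integral_const_mul, hIAV0 t, hIUV0 t]
    nlinarith [mul_le_mul_of_nonneg_left (hGV t) (sq_nonneg α),
      mul_le_mul_of_nonneg_left (hGle t) (mul_nonneg (sq_nonneg α) hβpos.le),
      mul_le_mul_of_nonneg_left (hIAUge t) (by positivity : (0:ℝ) ≤ 2 * α),
      hGU0 t, hδ0 t]
  -- descent of the objective values
  have hδeq : ∀ s : ℕ, ∫ ω, (ℓ (x s ω) - ℓ xstar) ∂P = (∫ ω, ℓ (x s ω) ∂P) - ℓ xstar := by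
    intro s
    rw [integral_sub (hℓint s) (integrable_const _), integral_const]
    simp
  have hδdec : ∀ t, ∫ ω, (ℓ (x (t+1) ω) - ℓ xstar) ∂P
      ≤ ∫ ω, (ℓ (x t ω) - ℓ xstar) ∂P := by
    intro t
    have hpt : ∀ ω, ℓ (x (t+1) ω)
        ≤ ℓ (x t ω) + (L/2 * α ^ 2 - α) * ‖g (x t ω)‖ ^ 2
          + (L * α ^ 2 - α) * ⟪g (x t ω), e t ω⟫ + L/2 * α ^ 2 * ‖e t ω‖ ^ 2 := by
      intro ω
      have h := hsmooth (x (t+1) ω) (x t ω)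
      have hdiff : x (t+1) ω - x t ω = -(α • (g (x t ω) + e t ω)) := by
        rw [hupdate t ω]
        exact sub_sub_cancel_left _ _
      rw [hdiff] at h
      rw [inner_neg_right, inner_smul_right, inner_add_right,
        real_inner_self_eq_norm_sq, norm_neg, norm_smul, Real.norm_eq_abs, mul_pow, sq_abs,
        norm_add_sq_real] at h
      nlinarith [h]
    have j1 : Integrable (fun ω => ℓ (x t ω)
        + (L/2 * α ^ 2 - α) * ‖g (x t ω)‖ ^ 2) P := (hℓint t).add ((hiU t).const_mul _)
    have j2 : Integrable (fun ω => ℓ (x t ω)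
        + (L/2 * α ^ 2 - α) * ‖g (x t ω)‖ ^ 2
        + (L * α ^ 2 - α) * ⟪g (x t ω), e t ω⟫) P := j1.add ((hiUV t).const_mul _)
    have hInt : ∫ ω, ℓ (x (t+1) ω) ∂P
        ≤ ∫ ω, (ℓ (x t ω) + (L/2 * α ^ 2 - α) * ‖g (x t ω)‖ ^ 2
            + (L * α ^ 2 - α) * ⟪g (x t ω), e t ω⟫ + L/2 * α ^ 2 * ‖e t ω‖ ^ 2) ∂P :=
      integral_mono (hℓint (t+1)) (j2.add ((hiV t).const_mul _)) hpt
    rw [integral_add j2 ((hiV t).const_mul _), integral_add j1 ((hiUV t).const_mul _),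
      integral_add (hℓint t) ((hiU t).const_mul _), integral_const_mul, integral_const_mul,
      integral_const_mul, hIUV0 t] at hInt
    have final : (L/2 * α ^ 2 - α) * ∫ ω, ‖g (x t ω)‖ ^ 2 ∂P
        + L/2 * α ^ 2 * ∫ ω, ‖e t ω‖ ^ 2 ∂P ≤ 0 := by
      nlinarith [mul_le_mul_of_nonneg_left (hGV t) (by positivity : (0:ℝ) ≤ L/2 * α ^ 2),
        mul_le_mul_of_nonneg_right hαLβ.le (mul_nonneg hα0.le (hGU0 t)),
        hGU0 t, hα0, hβpos, hL]
    rw [hδeq, hδeq]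
    linarith [hInt, final]
  -- telescoping
  have hD0 : ∫ ω, ‖x 0 ω - xstar‖ ^ 2 ∂P = ‖x0 - xstar‖ ^ 2 := by
    simp [hx0]
  have hmain : ∀ T : ℕ, ((T:ℝ) + 1)
      * ((2 * α - 2 * L * α ^ 2 * β) * ∫ ω, (ℓ (x T ω) - ℓ xstar) ∂P)
      ≤ ‖x0 - xstar‖ ^ 2 - ∫ ω, ‖x (T+1) ω - xstar‖ ^ 2 ∂P := by
    intro T
    induction T with
    | zero =>
      have h := hDrec 0
      rw [hD0] at h
      push_cast
      linarith
    | succ T ih =>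
      have h := hDrec (T+1)
      have hd := hδdec T
      have hmul : ((T:ℝ) + 1)
          * ((2 * α - 2 * L * α ^ 2 * β) * ∫ ω, (ℓ (x (T+1) ω) - ℓ xstar) ∂P)
          ≤ ((T:ℝ) + 1)
          * ((2 * α - 2 * L * α ^ 2 * β) * ∫ ω, (ℓ (x T ω) - ℓ xstar) ∂P) := by
        exact mul_le_mul_of_nonneg_left (mul_le_mul_of_nonneg_left hd hc.le) (by positivity)
      push_cast
      nlinarith [ih, h, hmul]
  have part1 : ∀ T : ℕ, ∫ ω, (ℓ (x T ω) - ℓ xstar) ∂P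
      ≤ ‖x0 - xstar‖ ^ 2 / ((2 * α - 2 * L * α ^ 2 * β) * (T + 1)) := by
    intro T
    have h := hmain T
    have hpos : 0 < (2 * α - 2 * L * α ^ 2 * β) * ((T:ℝ) + 1) :=
      mul_pos hc (by positivity)
    rw [le_div_iff₀ hpos]
    nlinarith [hA0 (T+1)]
  refine ⟨part1, fun hα' T => ?_⟩
  have h := part1 T
  have hd : 2 * α - 2 * L * α ^ 2 * β = 1 / (2 * L * β) := by
    rw [hα']
    field_simp
    ring
  rw [hd] at h
  have heq : ‖x0 - xstar‖ ^ 2 / (1 / (2 * L * β) * ((T:ℝ) + 1))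
      = 2 * L * β * ‖x0 - xstar‖ ^ 2 / ((T:ℝ) + 1) := by
    have h2 : ((T:ℝ) + 1) ≠ 0 := by positivity
    field_simp
  rw [heq] at h
  exact h
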